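/- Let $V_\bullet = \bigoplus_{n\ge 0} V_n$ be a graded algebra with a multiplicative decreasing $\mathbb{R}$-filtration $\{V_\bullet^t\}$ (i.e. $V_{n_1}^{t_1} \cdot V_{n_2}^{t_2} \subseteq V_{n_1+n_2}^{t_1+t_2}$), and let $\nu$ be a valuation-like map on $V_\bullet \setminus \{0\}$ to $\mathbb{Z}^r$ with $\nu(s_1 s_2) = \nu(s_1)+\nu(s_2)$. Then the concave transform $G(x) = \sup\{t : x \in \Delta_\nu(V_\bullet^t)\}$, where $\Delta_\nu(W_\bullet)$ is the closed convex hull closure of $\bigcup_n \frac{1}{n}\nu(W_n \setminus \{0\})$, is a concave function on the interior of $\Delta_\nu(V_\bullet)$. -/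

import Mathlib

open Filter Topology

section Aux

variable {k A : Type*} [Field k] [CommRing A] [IsDomain A] [Algebra k A] {r : ℕ}

def BSet (F : ℕ → ℝ → Submodule k A) (ν : A → Fin r → ℤ) (t : ℝ) : Set (Fin r → ℝ) :=
  {x | ∃ n : ℕ, 0 < n ∧ ∃ a ∈ F n ((n : ℝ) * t), a ≠ 0 ∧ x = (n : ℝ)⁻¹ • fun i => (ν a i : ℝ)}

variable {F : ℕ → ℝ → Submodule k A} {ν : A → Fin r → ℤ}

lemma BSet_anti (hanti : ∀ n, Antitone (F n)) {t' τ : ℝ} (h : t' ≤ τ) :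
    BSet F ν τ ⊆ BSet F ν t' := by
  rintro x ⟨n, hn, a, haF, ha0, rfl⟩
  exact ⟨n, hn, a, hanti n (mul_le_mul_of_nonneg_left h (by positivity)) haF, ha0, rfl⟩

lemma pow_mem_F (hmul : ∀ n₁ n₂ : ℕ, ∀ t₁ t₂ : ℝ, ∀ a ∈ F n₁ t₁, ∀ b ∈ F n₂ t₂,
      a * b ∈ F (n₁ + n₂) (t₁ + t₂)) :
    ∀ kk : ℕ, 0 < kk → ∀ (n : ℕ) (τ : ℝ) (a : A), a ∈ F n τ →
      a ^ kk ∈ F (kk * n) ((kk : ℝ) * τ) := by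
  intro kk
  induction kk with
  | zero => intro h; exact absurd h (lt_irrefl 0)
  | succ m ih =>
    intro _ n τ a ha
    rcases Nat.eq_zero_or_pos m with hm | hm
    · subst hm; simpa using ha
    · have h1 := hmul (m * n) n ((m : ℝ) * τ) τ _ (ih hm n τ a ha) a ha
      have e1 : (m + 1) * n = m * n + n := by ring
      have e2 : ((m + 1 : ℕ) : ℝ) * τ = (m : ℝ) * τ + τ := by push_cast; ring
      rw [e1, e2, pow_succ]
      exact h1

lemma nu_pow (hν : ∀ a b : A, a ≠ 0 → b ≠ 0 → ν (a * b) = ν a + ν b) :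
    ∀ kk : ℕ, 0 < kk → ∀ a : A, a ≠ 0 → ∀ i, ν (a ^ kk) i = kk * ν a i := by
  intro kk
  induction kk with
  | zero => intro h; exact absurd h (lt_irrefl 0)
  | succ m ih =>
    intro _ a ha i
    rcases Nat.eq_zero_or_pos m with hm | hm
    · subst hm; simp
    · rw [pow_succ, hν _ _ (pow_ne_zero _ ha) ha]
      have := ih hm a ha i
      simp only [Pi.add_apply, this]
      push_cast
      ring

lemma comb_mem (hmul : ∀ n₁ n₂ : ℕ, ∀ t₁ t₂ : ℝ, ∀ a ∈ F n₁ t₁, ∀ b ∈ F n₂ t₂,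
      a * b ∈ F (n₁ + n₂) (t₁ + t₂))
    (hν : ∀ a b : A, a ≠ 0 → b ≠ 0 → ν (a * b) = ν a + ν b)
    {t s : ℝ} {x y : Fin r → ℝ} {p q : ℕ}
    (hp : 0 < p) (hq : 0 < q) (hx : x ∈ BSet F ν t) (hy : y ∈ BSet F ν s) :
    ((p : ℝ) / ((p : ℝ) + (q : ℝ))) • x + ((q : ℝ) / ((p : ℝ) + (q : ℝ))) • y ∈
      BSet F ν (((p : ℝ) / ((p : ℝ) + (q : ℝ))) * t + ((q : ℝ) / ((p : ℝ) + (q : ℝ))) * s) := by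
  obtain ⟨n, hn, a₁, ha₁, ha₁0, rfl⟩ := hx
  obtain ⟨m, hm, a₂, ha₂, ha₂0, rfl⟩ := hy
  have hp' : (0:ℝ) < p := by exact_mod_cast hp
  have hq' : (0:ℝ) < q := by exact_mod_cast hq
  have hn' : (0:ℝ) < n := by exact_mod_cast hn
  have hm' : (0:ℝ) < m := by exact_mod_cast hm
  have hpq : (0:ℝ) < (p:ℝ) + q := by linarith
  refine ⟨p * m * n + q * n * m, by positivity, a₁ ^ (p * m) * a₂ ^ (q * n), ?_,
    mul_ne_zero (pow_ne_zero _ ha₁0) (pow_ne_zero _ ha₂0), ?_⟩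
  · have h1 := pow_mem_F hmul (p * m) (by positivity) n ((n:ℝ) * t) a₁ ha₁
    have h2 := pow_mem_F hmul (q * n) (by positivity) m ((m:ℝ) * s) a₂ ha₂
    have h3 := hmul _ _ _ _ _ h1 _ h2
    have e : ((p * m * n + q * n * m : ℕ) : ℝ) *
        (((p : ℝ) / ((p : ℝ) + (q : ℝ))) * t + ((q : ℝ) / ((p : ℝ) + (q : ℝ))) * s) =
        ((p * m : ℕ) : ℝ) * ((n:ℝ) * t) + ((q * n : ℕ) : ℝ) * ((m:ℝ) * s) := by
      push_cast
      field_simp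
    rw [e]
    exact h3
  · funext i
    have hνc := hν _ _ (pow_ne_zero (p*m) ha₁0) (pow_ne_zero (q*n) ha₂0)
    have e1 := nu_pow hν (p*m) (by positivity) a₁ ha₁0 i
    have e2 := nu_pow hν (q*n) (by positivity) a₂ ha₂0 i
    simp only [Pi.add_apply, Pi.smul_apply, smul_eq_mul, hνc, e1, e2]
    push_cast
    field_simp

lemma comb_closure (hmul : ∀ n₁ n₂ : ℕ, ∀ t₁ t₂ : ℝ, ∀ a ∈ F n₁ t₁, ∀ b ∈ F n₂ t₂,
      a * b ∈ F (n₁ + n₂) (t₁ + t₂))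
    (hanti : ∀ n, Antitone (F n))
    (hν : ∀ a b : A, a ≠ 0 → b ≠ 0 → ν (a * b) = ν a + ν b)
    {t s t' : ℝ} {x y : Fin r → ℝ} {a b : ℝ}
    (ha : 0 ≤ a) (hb : 0 ≤ b) (hab : a + b = 1)
    (hx : x ∈ closure (BSet F ν t)) (hy : y ∈ closure (BSet F ν s))
    (ht' : t' < a * t + b * s) :
    a • x + b • y ∈ closure (BSet F ν t') := by
  rcases eq_or_lt_of_le ha with rfl | ha'
  · have hb1 : b = 1 := by linarith
    subst hb1
    rw [zero_smul, zero_add, one_smul]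
    exact closure_mono (BSet_anti hanti (by linarith : t' ≤ s)) hy
  rcases eq_or_lt_of_le hb with rfl | hb'
  · have ha1 : a = 1 := by linarith
    subst ha1
    rw [zero_smul, add_zero, one_smul]
    exact closure_mono (BSet_anti hanti (by linarith : t' ≤ t)) hx
  have ha1 : a < 1 := by linarith
  obtain ⟨u, hu, hux⟩ := mem_closure_iff_seq_limit.1 hx
  obtain ⟨v, hv, hvy⟩ := mem_closure_iff_seq_limit.1 hy
  set p : ℕ → ℕ := fun j => ⌊a * ((j:ℝ) + 1)⌋₊ with hpdef
  set lam : ℕ → ℝ := fun j => (p j : ℝ) / ((j:ℝ) + 1) with hlamdef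
  have hjpos : ∀ j : ℕ, (0:ℝ) < (j:ℝ) + 1 := fun j => by positivity
  have hhigh : ∀ j : ℕ, lam j ≤ a := by
    intro j
    show (p j : ℝ) / ((j:ℝ) + 1) ≤ a
    rw [div_le_iff₀ (hjpos j)]
    exact Nat.floor_le (by positivity)
  have hlow : ∀ j : ℕ, a - 1 / ((j:ℝ) + 1) ≤ lam j := by
    intro j
    have h1 : a * ((j:ℝ) + 1) < (p j : ℝ) + 1 := Nat.lt_floor_add_one _
    show a - 1 / ((j:ℝ) + 1) ≤ (p j : ℝ) / ((j:ℝ) + 1)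
    rw [sub_le_iff_le_add, ← add_div, le_div_iff₀ (hjpos j)]
    linarith
  have hlam : Tendsto lam atTop (𝓝 a) := by
    have h0 : Tendsto (fun j : ℕ => a - 1 / ((j:ℝ) + 1)) atTop (𝓝 a) := by
      have h1 := tendsto_one_div_add_atTop_nhds_zero_nat (𝕜 := ℝ)
      simpa using tendsto_const_nhds.sub h1
    exact tendsto_of_tendsto_of_tendsto_of_le_of_le h0 tendsto_const_nhds hlow hhigh
  have hplt : ∀ j : ℕ, p j < j + 1 := by
    intro j
    show ⌊a * ((j:ℝ) + 1)⌋₊ < j + 1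
    apply (Nat.floor_lt (by positivity)).2
    push_cast
    nlinarith [hjpos j]
  have hqcast : ∀ j : ℕ, ((j + 1 - p j : ℕ) : ℝ) = ((j:ℝ) + 1) - (p j : ℝ) := by
    intro j
    rw [Nat.cast_sub (hplt j).le]
    push_cast
    ring
  have hb1 : b = 1 - a := by linarith
  have htend : Tendsto (fun j => lam j • u j + (1 - lam j) • v j) atTop (𝓝 (a • x + b • y)) := by
    rw [hb1]
    exact (hlam.smul hux).add ((tendsto_const_nhds.sub hlam).smul hvy)
  have hev1 : ∀ᶠ j in atTop, 0 < p j := by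
    have h2 : ∀ᶠ j in atTop, 0 < lam j := hlam.eventually (eventually_gt_nhds ha')
    filter_upwards [h2] with j hj
    rcases Nat.eq_zero_or_pos (p j) with h0 | h1
    · exfalso
      have hl0 : lam j = 0 := by
        show (p j : ℝ) / ((j:ℝ) + 1) = 0
        rw [h0]
        simp
      rw [hl0] at hj
      exact lt_irrefl 0 hj
    · exact h1
  have hev2 : ∀ᶠ j in atTop, t' < lam j * t + (1 - lam j) * s := by
    have hcomb : Tendsto (fun j => lam j * t + (1 - lam j) * s) atTop (𝓝 (a * t + b * s)) := by
      rw [hb1]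
      exact (hlam.mul tendsto_const_nhds).add ((tendsto_const_nhds.sub hlam).mul tendsto_const_nhds)
    exact hcomb.eventually (eventually_gt_nhds ht')
  apply mem_closure_of_tendsto htend
  filter_upwards [hev1, hev2] with j hj1 hj2
  apply BSet_anti hanti (le_of_lt hj2)
  have hq1 : 0 < j + 1 - p j := by have := hplt j; omega
  have hsum : (p j : ℝ) + ((j + 1 - p j : ℕ) : ℝ) = (j:ℝ) + 1 := by rw [hqcast j]; ring
  have e1 : (p j : ℝ) / ((p j : ℝ) + ((j + 1 - p j : ℕ) : ℝ)) = lam j := by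
    rw [hsum]
  have e2 : ((j + 1 - p j : ℕ) : ℝ) / ((p j : ℝ) + ((j + 1 - p j : ℕ) : ℝ)) = 1 - lam j := by
    rw [hsum, hqcast j]
    show _ = 1 - (p j : ℝ) / ((j:ℝ) + 1)
    field_simp
  rw [← e2, ← e1]
  exact comb_mem hmul hν hj1 hq1 (hu j) (hv j)

lemma sup_lemma {Sx Sy Sz : Set ℝ} {a b : ℝ} (ha : 0 ≤ a) (hb : 0 ≤ b)
    (hbx : BddAbove Sx) (hnx : Sx.Nonempty) (hby : BddAbove Sy) (hny : Sy.Nonempty)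
    (hbz : BddAbove Sz)
    (hkey : ∀ t ∈ Sx, ∀ s ∈ Sy, ∀ t', t' < a * t + b * s → t' ∈ Sz) :
    a * sSup Sx + b * sSup Sy ≤ sSup Sz := by
  by_contra hcon
  push_neg at hcon
  obtain ⟨t', ht1, ht2⟩ := exists_between hcon
  set ε := (a * sSup Sx + b * sSup Sy - t') / 2 with hεdef
  have hε : 0 < ε := by rw [hεdef]; linarith
  have hxpick : ∃ t ∈ Sx, a * sSup Sx - ε < a * t := by
    rcases eq_or_lt_of_le ha with rfl | ha'
    · obtain ⟨t, ht⟩ := hnx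
      exact ⟨t, ht, by simpa using hε⟩
    · obtain ⟨t, htS, htlt⟩ := exists_lt_of_lt_csSup hnx
        (show sSup Sx - ε / a < sSup Sx by have := div_pos hε ha'; linarith)
      refine ⟨t, htS, ?_⟩
      have h3 := mul_lt_mul_of_pos_left htlt ha'
      rw [mul_sub] at h3
      rw [mul_div_cancel₀ _ (ne_of_gt ha')] at h3
      linarith
  have hypick : ∃ s ∈ Sy, b * sSup Sy - ε < b * s := by
    rcases eq_or_lt_of_le hb with rfl | hb'
    · obtain ⟨s, hs⟩ := hny
      exact ⟨s, hs, by simpa using hε⟩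
    · obtain ⟨s, hsS, hslt⟩ := exists_lt_of_lt_csSup hny
        (show sSup Sy - ε / b < sSup Sy by have := div_pos hε hb'; linarith)
      refine ⟨s, hsS, ?_⟩
      have h3 := mul_lt_mul_of_pos_left hslt hb'
      rw [mul_sub] at h3
      rw [mul_div_cancel₀ _ (ne_of_gt hb')] at h3
      linarith
  obtain ⟨t, htS, htlt⟩ := hxpick
  obtain ⟨s, hsS, hslt⟩ := hypick
  have ht' : t' < a * t + b * s := by rw [hεdef] at htlt hslt; linarith
  have := le_csSup hbz (hkey t htS s hsS t' ht')
  linarith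

end Aux

/-!
Boucksom–Chen concave transform.  `A` is a graded `k`-algebra without zero divisors,
with graded pieces `𝒜 n` (so `V_n = 𝒜 n`, `V_• = ⨁ V_n`), endowed with a decreasing
multiplicative `ℝ`-filtration `F n t ⊆ 𝒜 n` (i.e. `V_{n₁}^{t₁} · V_{n₂}^{t₂} ⊆
V_{n₁+n₂}^{t₁+t₂}`), and `ν` is a valuation-like map to `ℤ^r`, additive on products of
nonzero elements.  For a graded family of subspaces `S`, `Δ S` is the closure of
`⋃_{n ≥ 1} (1/n)·ν(S n \ {0})`, and the concave transform is
`G x = sup {t : x ∈ Δ(V_•^t)}`, where `V_•^t` has graded pieces `F n (n·t)`.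
The theorem: `G` is concave on the interior of the Okounkov body `Δ(V_•)`.
(The hypothesis `hbdd` ensures the defining `sup` is a genuine real number.)
-/
theorem stmt_8 {k A : Type*} [Field k] [CommRing A] [IsDomain A] [Algebra k A]
    (r : ℕ) (𝒜 : ℕ → Submodule k A)
    (h𝒜mul : ∀ m n : ℕ, ∀ a ∈ 𝒜 m, ∀ b ∈ 𝒜 n, a * b ∈ 𝒜 (m + n))
    (F : ℕ → ℝ → Submodule k A)
    (hF𝒜 : ∀ n t, F n t ≤ 𝒜 n)
    (hanti : ∀ n, Antitone (F n))
    (hmul : ∀ n₁ n₂ : ℕ, ∀ t₁ t₂ : ℝ, ∀ a ∈ F n₁ t₁, ∀ b ∈ F n₂ t₂,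
      a * b ∈ F (n₁ + n₂) (t₁ + t₂))
    (ν : A → Fin r → ℤ)
    (hν : ∀ a b : A, a ≠ 0 → b ≠ 0 → ν (a * b) = ν a + ν b)
    (Δ : (ℕ → Submodule k A) → Set (Fin r → ℝ))
    (hΔ : ∀ S : ℕ → Submodule k A, Δ S = closure {x : Fin r → ℝ | ∃ n : ℕ, 0 < n ∧
      ∃ a ∈ S n, a ≠ 0 ∧ x = (n : ℝ)⁻¹ • fun i => (ν a i : ℝ)})
    (G : (Fin r → ℝ) → ℝ)
    (hG : ∀ x, G x = sSup {t : ℝ | x ∈ Δ fun n => F n (n * t)})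
    (hbdd : ∀ x ∈ interior (Δ 𝒜),
      BddAbove {t : ℝ | x ∈ Δ fun n => F n (n * t)} ∧
      {t : ℝ | x ∈ Δ fun n => F n (n * t)}.Nonempty) :
    ConcaveOn ℝ (interior (Δ 𝒜)) G := by
  have hmul0 : ∀ n₁ n₂ : ℕ, ∀ t₁ t₂ : ℝ, ∀ a ∈ (fun n (_ : ℝ) => 𝒜 n) n₁ t₁,
      ∀ b ∈ (fun n (_ : ℝ) => 𝒜 n) n₂ t₂, a * b ∈ (fun n (_ : ℝ) => 𝒜 n) (n₁ + n₂) (t₁ + t₂) :=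
    fun n₁ n₂ _ _ a ha b hb => h𝒜mul n₁ n₂ a ha b hb
  have hanti0 : ∀ n, Antitone ((fun n (_ : ℝ) => 𝒜 n) n) := fun _ _ _ _ => le_rfl
  have hconv : Convex ℝ (Δ 𝒜) := by
    rw [hΔ]
    intro x hx y hy a b ha hb hab
    have hx' : x ∈ closure (BSet (fun n (_ : ℝ) => 𝒜 n) ν 0) := hx
    have hy' : y ∈ closure (BSet (fun n (_ : ℝ) => 𝒜 n) ν 0) := hy
    have h := comb_closure (F := fun n (_ : ℝ) => 𝒜 n) hmul0 hanti0 hν ha hb hab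
      hx' hy' (t' := -1) (by norm_num)
    exact h
  refine ⟨hconv.interior, ?_⟩
  intro x hx y hy a b ha hb hab
  have hz := hconv.interior hx hy ha hb hab
  obtain ⟨hbx, hnx⟩ := hbdd x hx
  obtain ⟨hby, hny⟩ := hbdd y hy
  obtain ⟨hbz, hnz⟩ := hbdd _ hz
  simp only [hG, smul_eq_mul]
  apply sup_lemma ha hb hbx hnx hby hny hbz
  intro t ht s hs t' hlt
  have hx' : x ∈ closure (BSet F ν t) := by
    have h := ht
    rw [Set.mem_setOf_eq, hΔ] at h
    exact h
  have hy' : y ∈ closure (BSet F ν s) := by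
    have h := hs
    rw [Set.mem_setOf_eq, hΔ] at h
    exact h
  have h := comb_closure hmul hanti hν ha hb hab hx' hy' hlt
  show (a • x + b • y) ∈ Δ fun n => F n (n * t')
  rw [hΔ]
  exact h
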